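/- (Proposition 2.2 (i): mass conservation.) For every f ∈ L²_M one has ∑' n, ∫ p, Q f n p = 0. -/

import Mathlib

open MeasureTheory Real

set_option maxHeartbeats 1000000 in
theorem stmt3
    (m ε : ℕ → ℝ)
    (hm : ∀ n, 0 < m n)
    (hε : Summable fun n => Real.exp (-ε n))
    (Z : ℝ) (hZ : Z = ∑' n, Real.exp (-ε n))
    (M : ℕ → ℝ → ℝ)
    (hM : ∀ n p, M n p =
      Real.exp (-(p ^ 2 / (2 * m n) + ε n)) / (Real.sqrt (2 * Real.pi * m n) * Z))
    (hMnorm : (∑' n, ∫ p, M n p) = 1)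
    (α : ℕ → ℕ → ℝ → ℝ → ℝ)
    (hαmeas : ∀ n n', Measurable fun q : ℝ × ℝ => α n n' q.1 q.2)
    (α₁ α₂ : ℝ) (hα₁ : 0 < α₁) (hα₁₂ : α₁ ≤ α₂)
    (hsym : ∀ n n' p p', α n n' p p' = α n' n p' p)
    (hbd : ∀ n n' p p', α₁ ≤ α n n' p p' ∧ α n n' p p' ≤ α₂)
    (Q : (ℕ → ℝ → ℝ) → ℕ → ℝ → ℝ)
    (hQ : ∀ f n p, Q f n p =
      ∑' n', ∫ p', α n n' p p' * (M n p * f n' p' - M n' p' * f n p))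
    (memL2M : (ℕ → ℝ → ℝ) → Prop)
    (hmem : ∀ f, memL2M f ↔ (∀ n, Measurable (f n)) ∧
      (∀ n, Integrable fun p => f n p ^ 2 / M n p) ∧
      (Summable fun n => ∫ p, f n p ^ 2 / M n p))
    (nrm : (ℕ → ℝ → ℝ) → ℝ)
    (hnrm : ∀ f, nrm f = (∑' n, ∫ p, f n p ^ 2 / M n p) ^ ((1 : ℝ) / 2)) :
    ∀ f, memL2M f → (∑' n, ∫ p, Q f n p) = 0 := by
  intro f hf
  rw [hmem] at hf
  obtain ⟨hfm, hfi, hfs⟩ := hf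
  have hα₂0 : (0:ℝ) < α₂ := hα₁.trans_le hα₁₂
  have hZ0 : 0 < Z := by
    rw [hZ]; exact Summable.tsum_pos hε (fun n => (Real.exp_pos _).le) 0 (Real.exp_pos _)
  have hs : ∀ n, 0 < Real.sqrt (2 * Real.pi * m n) := fun n =>
    Real.sqrt_pos.2 (by have := hm n; have := Real.pi_pos; positivity)
  have hMpos : ∀ n p, 0 < M n p := fun n p => by
    rw [hM]; exact div_pos (Real.exp_pos _) (mul_pos (hs n) hZ0)
  have hMeq : ∀ n, M n = fun p => (Real.exp (-ε n) / (Real.sqrt (2 * Real.pi * m n) * Z)) *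
      Real.exp (-(1 / (2 * m n)) * p ^ 2) := by
    intro n; funext p
    rw [hM, div_mul_eq_mul_div, ← Real.exp_add]
    congr 1
    have := (hm n).ne'
    field_simp
    congr 1; ring
  have hb : ∀ n, (0:ℝ) < 1 / (2 * m n) := fun n => by have := hm n; positivity
  have hMint : ∀ n, Integrable (M n) := by
    intro n
    rw [hMeq n]
    exact (integrable_exp_neg_mul_sq (hb n)).const_mul _
  have hBval : ∀ n, ∫ p, M n p = Real.exp (-ε n) / Z := by
    intro n
    rw [hMeq n, integral_const_mul _, integral_gaussian]
    have h1 : Real.pi / (1 / (2 * m n)) = 2 * Real.pi * m n := by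
      have := (hm n).ne'
      field_simp
    rw [h1]
    have hsne := (hs n).ne'
    have hZne := hZ0.ne'
    set s := Real.sqrt (2 * Real.pi * m n) with hss
    field_simp
  have hBsum : Summable (fun n => ∫ p, M n p) := by
    simp only [hBval]; exact hε.div_const Z
  -- integrability of f n
  have hfabs : ∀ n p, ‖f n p‖ ≤ (f n p ^ 2 / M n p + M n p) / 2 := by
    intro n p
    have hM0 := hMpos n p
    rw [Real.norm_eq_abs, le_div_iff₀ (by norm_num : (0:ℝ) < 2), ← sub_nonneg]
    have e : f n p ^ 2 / M n p + M n p - |f n p| * 2 = (|f n p| - M n p) ^ 2 / M n p := by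
      field_simp
      rw [sub_sq, sq_abs]
      ring
    rw [e]; positivity
  have hdomint : ∀ n, Integrable (fun p => (f n p ^ 2 / M n p + M n p) / 2) :=
    fun n => ((hfi n).add (hMint n)).div_const 2
  have hfint : ∀ n, Integrable (f n) := fun n =>
    Integrable.mono' (hdomint n) (hfm n).aestronglyMeasurable
      (Filter.Eventually.of_forall (hfabs n))
  set A : ℕ → ℝ := fun n => ((∫ p, f n p ^ 2 / M n p) + ∫ p, M n p) / 2 with hA
  have hfA : ∀ n, ∫ p, ‖f n p‖ ≤ A n := by
    intro n
    have h := integral_mono (hfint n).norm (hdomint n) (fun p => hfabs n p)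
    calc ∫ p, ‖f n p‖ ≤ ∫ p, (f n p ^ 2 / M n p + M n p) / 2 := h
      _ = A n := by
        rw [integral_div, integral_add (hfi n) (hMint n)]
  have hApos : ∀ n, 0 ≤ A n := fun n =>
    (integral_nonneg fun p => norm_nonneg _).trans (hfA n)
  have hAsum : Summable A := (hfs.add hBsum).div_const 2
  -- measurability of M
  have hMmeas : ∀ n, Measurable (M n) := by
    intro n
    rw [hMeq n]
    exact (((measurable_id.pow_const 2).const_mul _).exp).const_mul _
  -- the pair integrand
  set F : ℕ → ℕ → ℝ × ℝ → ℝ := fun n n' q =>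
    α n n' q.1 q.2 * (M n q.1 * f n' q.2 - M n' q.2 * f n q.1) with hF
  have hFmeas : ∀ n n', Measurable (F n n') := fun n n' =>
    (hαmeas n n').mul ((((hMmeas n).comp measurable_fst).mul ((hfm n').comp measurable_snd)).sub
      (((hMmeas n').comp measurable_snd).mul ((hfm n).comp measurable_fst)))
  set D : ℕ → ℕ → ℝ × ℝ → ℝ := fun n n' q =>
    α₂ * (M n q.1 * ‖f n' q.2‖ + ‖f n q.1‖ * M n' q.2) with hD
  have hDint : ∀ n n', Integrable (D n n') (volume.prod volume) := fun n n' =>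
    (((hMint n).mul_prod (hfint n').norm).add ((hfint n).norm.mul_prod (hMint n'))).const_mul α₂
  have hFbd : ∀ n n' q, ‖F n n' q‖ ≤ D n n' q := by
    intro n n' q
    have hαb := hbd n n' q.1 q.2
    have h1 : ‖α n n' q.1 q.2‖ ≤ α₂ := by
      rw [Real.norm_eq_abs, abs_of_nonneg (hα₁.le.trans hαb.1)]; exact hαb.2
    have h2 : ‖M n q.1 * f n' q.2 - M n' q.2 * f n q.1‖ ≤
        M n q.1 * ‖f n' q.2‖ + ‖f n q.1‖ * M n' q.2 := by
      refine (norm_sub_le _ _).trans ?_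
      rw [norm_mul, norm_mul, Real.norm_of_nonneg (hMpos n q.1).le,
        Real.norm_of_nonneg (hMpos n' q.2).le]
      rw [mul_comm (M n' q.2)]
    calc ‖F n n' q‖ = ‖α n n' q.1 q.2‖ * ‖M n q.1 * f n' q.2 - M n' q.2 * f n q.1‖ := by
          simp only [hF]; exact norm_mul _ _
      _ ≤ α₂ * (M n q.1 * ‖f n' q.2‖ + ‖f n q.1‖ * M n' q.2) :=
          mul_le_mul h1 h2 (norm_nonneg _) hα₂0.le
      _ = D n n' q := by simp only [hD]
  have hFint : ∀ n n', Integrable (F n n') (volume.prod volume) := fun n n' =>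
    (hDint n n').mono' (hFmeas n n').aestronglyMeasurable
      (Filter.Eventually.of_forall (hFbd n n'))
  have hDval : ∀ n n', ∫ z, D n n' z ∂(volume.prod volume) =
      α₂ * ((∫ p, M n p) * (∫ p, ‖f n' p‖) + (∫ p, ‖f n p‖) * (∫ p, M n' p)) := by
    intro n n'
    simp only [hD]
    rw [integral_const_mul _,
      integral_add ((hMint n).mul_prod (hfint n').norm) ((hfint n).norm.mul_prod (hMint n')),
      integral_prod_mul (M n) (fun p => ‖f n' p‖), integral_prod_mul (fun p => ‖f n p‖) (M n')]
  -- summable bound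
  set W : ℕ × ℕ → ℝ := fun q =>
    α₂ * (Real.exp (-ε q.1) / Z * A q.2 + A q.1 * (Real.exp (-ε q.2) / Z)) with hW
  have hWpos : ∀ q, 0 ≤ W q := by
    intro q
    rw [hW]
    have := hApos q.1; have := hApos q.2; have := (Real.exp_pos (-ε q.1)).le
    have := (Real.exp_pos (-ε q.2)).le
    positivity
  have hWsum : Summable W := by
    rw [hW]
    have h1 : Summable fun n => ‖Real.exp (-ε n) / Z‖ := by
      simpa only [Real.norm_eq_abs] using (hε.div_const Z).abs
    have h2 : Summable fun n => ‖A n‖ := by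
      simpa only [Real.norm_eq_abs] using hAsum.abs
    exact ((summable_mul_of_summable_norm h1 h2).add
      (summable_mul_of_summable_norm h2 h1)).mul_left α₂
  have hDW : ∀ n n', ∫ z, D n n' z ∂(volume.prod volume) ≤ W (n, n') := by
    intro n n'
    rw [hDval, hW, hBval, hBval]
    have h1 := hfA n; have h2 := hfA n'
    have h3 : (0:ℝ) ≤ ∫ p, ‖f n p‖ := integral_nonneg fun p => norm_nonneg _
    have h4 : (0:ℝ) ≤ ∫ p, ‖f n' p‖ := integral_nonneg fun p => norm_nonneg _
    have h5 := (Real.exp_pos (-ε n)).le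
    have h6 := (Real.exp_pos (-ε n')).le
    apply mul_le_mul_of_nonneg_left _ hα₂0.le
    apply add_le_add
    · exact mul_le_mul_of_nonneg_left h2 (by positivity)
    · exact mul_le_mul_of_nonneg_right h1 (by positivity)
  -- the double integrals
  set G : ℕ × ℕ → ℝ := fun q => ∫ z, F q.1 q.2 z ∂(volume.prod volume) with hG
  have hGW : ∀ q, ‖G q‖ ≤ W q := by
    intro q
    calc ‖G q‖ ≤ ∫ z, ‖F q.1 q.2 z‖ ∂(volume.prod volume) := norm_integral_le_integral_norm _
      _ ≤ ∫ z, D q.1 q.2 z ∂(volume.prod volume) :=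
          integral_mono (hFint q.1 q.2).norm (hDint q.1 q.2) (fun z => hFbd q.1 q.2 z)
      _ ≤ W q := hDW q.1 q.2
  have hGsum : Summable G := Summable.of_norm_bounded hWsum hGW
  have hGanti : ∀ n n', G (n, n') = - G (n', n) := by
    intro n n'
    calc G (n, n') = ∫ z : ℝ × ℝ, F n n' z.swap ∂(volume.prod volume) :=
          (integral_prod_swap (F n n')).symm
      _ = ∫ z : ℝ × ℝ, -(F n' n z) ∂(volume.prod volume) := by
          congr 1; funext z
          simp only [hF, Prod.snd_swap, Prod.fst_swap]
          rw [hsym n n' z.2 z.1]; ring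
      _ = - G (n', n) := by rw [integral_neg]
  have hGzero : (∑' q : ℕ × ℕ, G q) = 0 := by
    have h1 : (∑' q : ℕ × ℕ, G q) = ∑' q : ℕ × ℕ, G ((Equiv.prodComm ℕ ℕ) q) :=
      ((Equiv.prodComm ℕ ℕ).tsum_eq G).symm
    have h2 : ∀ q : ℕ × ℕ, G ((Equiv.prodComm ℕ ℕ) q) = - G q := by
      intro q
      simpa using (hGanti q.2 q.1).symm ▸ (hGanti q.2 q.1)
    have h3 : (∑' q : ℕ × ℕ, G q) = - ∑' q : ℕ × ℕ, G q := by
      nth_rewrite 1 [h1]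
      rw [tsum_congr h2, tsum_neg]
    linarith
  -- per-band integral of Q
  have hQint : ∀ n, ∫ p, Q f n p = ∑' n', G (n, n') := by
    intro n
    have e1 : (fun p => Q f n p) = fun p => ∑' n', ∫ p', F n n' (p, p') := by
      funext p; rw [hQ]
    have hmeas : ∀ n', AEStronglyMeasurable (fun p => ∫ p', F n n' (p, p')) volume :=
      fun n' => ((hFint n n').integral_prod_left).aestronglyMeasurable
    have key : ∀ n', (∫⁻ p, ‖∫ p', F n n' (p, p')‖ₑ) ≤ ENNReal.ofReal (W (n, n')) := by
      intro n'
      rw [← ofReal_integral_norm_eq_lintegral_enorm ((hFint n n').integral_prod_left)]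
      apply ENNReal.ofReal_le_ofReal
      calc ∫ p, ‖∫ p', F n n' (p, p')‖
          ≤ ∫ p, ∫ p', ‖F n n' (p, p')‖ :=
            integral_mono ((hFint n n').integral_prod_left).norm
              ((hFint n n').integral_norm_prod_left)
              (fun p => norm_integral_le_integral_norm _)
        _ = ∫ z, ‖F n n' z‖ ∂(volume.prod volume) := integral_integral (hFint n n').norm
        _ ≤ ∫ z, D n n' z ∂(volume.prod volume) :=
            integral_mono (hFint n n').norm (hDint n n') (fun z => hFbd n n' z)
        _ ≤ W (n, n') := hDW n n'
    have hbound : (∑' n', ∫⁻ p, ‖∫ p', F n n' (p, p')‖ₑ) ≠ ⊤ := by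
      refine ne_top_of_le_ne_top ?_ (ENNReal.tsum_le_tsum key)
      rw [← ENNReal.ofReal_tsum_of_nonneg (fun n' => hWpos (n, n')) (hWsum.prod_factor n)]
      exact ENNReal.ofReal_ne_top
    rw [e1, integral_tsum hmeas hbound]
    exact tsum_congr fun n' => integral_integral (hFint n n')
  calc (∑' n, ∫ p, Q f n p) = ∑' n, ∑' n', G (n, n') := tsum_congr hQint
    _ = ∑' q : ℕ × ℕ, G q := (Summable.tsum_prod' hGsum (fun b => hGsum.prod_factor b)).symm
    _ = 0 := hGzero
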